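/- If G is a block graph with 𝒫(G) ≠ ∅, then μ(G) = μ₁(G); that is, the minimum of μ_m(v,v') over all m and all pairs (v,v') ∈ 𝒫_m(G) is attained at m = 1. -/

import Mathlib

/-- Set of vertices distinguishing `u` and `v`. -/
noncomputable def distinguishers {V : Type*} (G : SimpleGraph V) (u v : V) : Set V :=
  {w | G.dist u w ≠ G.dist v w}

/-- `Dim(G)`: the largest `k` such that every pair of distinct vertices is
distinguished by at least `k` vertices. -/
noncomputable def metricDim {V : Type*} (G : SimpleGraph V) : ℕ :=
  sSup {k | ∀ u v : V, u ≠ v → k ≤ (distinguishers G u v).ncard}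

/-- The boundary `∂N(v,m)`: vertices at distance `m` from `v` having a
neighbor outside `N(v,m)`. -/
def bdry {V : Type*} (G : SimpleGraph V) (v : V) (m : ℕ) : Set V :=
  {w | G.dist v w = m ∧ ∃ x, G.Adj w x ∧ m < G.dist v x}

/-- `v` and `v'` are distinct and have equal (nonempty) `m`-boundary. -/
def eqBdry {V : Type*} (G : SimpleGraph V) (v v' : V) (m : ℕ) : Prop :=
  v ≠ v' ∧ bdry G v m = bdry G v' m ∧ (bdry G v m).Nonempty

noncomputable def etaM {V : Type*} (G : SimpleGraph V) (v v' : V) (m : ℕ) : ℕ :=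
  {w | (G.dist v w ≤ m ∨ G.dist v' w ≤ m) ∧ G.dist v w ≠ G.dist v' w}.ncard

noncomputable def etaG {V : Type*} (G : SimpleGraph V) : ℕ :=
  sInf {n | ∃ (m : ℕ) (v v' : V), eqBdry G v v' m ∧ n = etaM G v v' m}

/-- the diameter of `G`. -/
noncomputable def gdiam {V : Type*} (G : SimpleGraph V) : ℕ :=
  sSup {n | ∃ u v : V, G.dist u v = n}

/-- Reachability in `G` avoiding the vertex set `S`. -/
def ReachOff {V : Type*} (G : SimpleGraph V) (S : Set V) (a b : V) : Prop :=
  ∃ p : G.Walk a b, ∀ x ∈ p.support, x ∉ S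

/-- `S` is a common separating subset of the `m`-spheres of `v` and `v'`. -/
def CommonSepSubset {V : Type*} (G : SimpleGraph V) (v v' : V) (m : ℕ) (S : Set V) : Prop :=
  S ⊆ {w | G.dist v w = m} ∩ {w | G.dist v' w = m} ∧
  (∃ a b : V, a ∉ S ∧ b ∉ S ∧ ¬ ReachOff G S a b) ∧
  (∃ w : V, w ∉ S ∧ ¬ ReachOff G S w v ∧ ¬ ReachOff G S w v')

/-- `(v,v') ∈ 𝒫ₘ(G)`. -/
def memPm {V : Type*} (G : SimpleGraph V) (v v' : V) (m : ℕ) : Prop :=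
  v ≠ v' ∧ ∃ S : Set V, CommonSepSubset G v v' m S

/-- `Sₘ(v,v')`: the union of all common separating subsets of the `m`-spheres. -/
def SmUnion {V : Type*} (G : SimpleGraph V) (v v' : V) (m : ℕ) : Set V :=
  {x | ∃ S : Set V, CommonSepSubset G v v' m S ∧ x ∈ S}

/-- The union of the components of `G \ Sₘ(v,v')` containing neither `v` nor `v'`. -/
def avoidComps {V : Type*} (G : SimpleGraph V) (v v' : V) (m : ℕ) : Set V :=
  {w | w ∉ SmUnion G v v' m ∧ ¬ ReachOff G (SmUnion G v v' m) w v ∧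
    ¬ ReachOff G (SmUnion G v v' m) w v'}

noncomputable def muM {V : Type*} (G : SimpleGraph V) (v v' : V) (m : ℕ) : ℕ :=
  {w | w ∉ avoidComps G v v' m ∧ G.dist v w ≠ G.dist v' w}.ncard

noncomputable def muG {V : Type*} (G : SimpleGraph V) : ℕ :=
  sInf {n | ∃ (m : ℕ) (v v' : V), memPm G v v' m ∧ n = muM G v v' m}

/-- degree as the cardinality of the neighbor set. -/
noncomputable def ndeg {V : Type*} (G : SimpleGraph V) (v : V) : ℕ := (G.neighborSet v).ncard

def IsMajor {V : Type*} (G : SimpleGraph V) (v : V) : Prop := 3 ≤ ndeg G v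

/-- `u` is a terminal vertex of the major vertex `w`. -/
def IsTerminalOf {V : Type*} (G : SimpleGraph V) (u w : V) : Prop :=
  ndeg G u = 1 ∧ IsMajor G w ∧
    ∀ w', IsMajor G w' → w' ≠ w → G.dist u w < G.dist u w'

/-- `G` is a V-graph. -/
def IsVGraph {V : Type*} (G : SimpleGraph V) : Prop :=
  ∃ w, IsMajor G w ∧ {u | IsTerminalOf G u w}.ncard = 2 ∧
    ∀ u, IsTerminalOf G u w → G.Adj u w

/-- `G` is a block graph: connected and every biconnected (2-connected)
set of vertices induces a clique. -/
def IsBlockGraph {V : Type*} (G : SimpleGraph V) : Prop :=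
  G.Connected ∧ ∀ B : Set V, 3 ≤ B.ncard → (G.induce B).Connected →
    (∀ x ∈ B, (G.induce (B \ {x})).Connected) → G.IsClique B

/-- `G` is tagged. -/
def Tagged {V : Type*} (G : SimpleGraph V) : Prop :=
  ∃ K : Set V, G.IsClique K ∧ (∀ K' : Set V, K ⊆ K' → G.IsClique K' → K' = K) ∧
    3 ≤ K.ncard ∧ ∃ u ∈ K, ∃ v ∈ K, u ≠ v ∧
      ndeg G u = K.ncard - 1 ∧ ndeg G v = K.ncard - 1

/-- `G` is neither a complete graph nor a path graph. -/
def NonElementary {V : Type*} (G : SimpleGraph V) : Prop :=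
  G ≠ ⊤ ∧ ∀ n : ℕ, IsEmpty (G ≃g SimpleGraph.pathGraph n)

section BlockAux
open SimpleGraph
variable {V : Type*} {G : SimpleGraph V}

lemma reachOff_refl {S : Set V} {a : V} (h : a ∉ S) : ReachOff G S a a :=
  ⟨Walk.nil, by
    intro x hx
    simp only [Walk.support_nil, List.mem_singleton] at hx
    subst hx; exact h⟩

lemma ReachOff.symm' {S : Set V} {a b : V} (h : ReachOff G S a b) : ReachOff G S b a := by
  obtain ⟨p, hp⟩ := h
  exact ⟨p.reverse, fun x hx => hp x (by simpa [Walk.support_reverse] using hx)⟩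

lemma ReachOff.trans' {S : Set V} {a b c : V} (h1 : ReachOff G S a b)
    (h2 : ReachOff G S b c) : ReachOff G S a c := by
  obtain ⟨p, hp⟩ := h1; obtain ⟨q, hq⟩ := h2
  refine ⟨p.append q, fun x hx => ?_⟩
  rcases (Walk.mem_support_append_iff p q).1 hx with hx | hx
  exacts [hp x hx, hq x hx]

lemma exists_mem_of_not_reachOff {S : Set V} {a b : V}
    (h : ¬ ReachOff G S a b) (p : G.Walk a b) : ∃ x ∈ p.support, x ∈ S := by
  by_contra hx; push_neg at hx; exact h ⟨p, hx⟩

lemma reachOff_empty (hc : G.Connected) (a b : V) : ReachOff G (∅ : Set V) a b := by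
  obtain ⟨p⟩ := hc.preconnected a b
  exact ⟨p, by simp⟩

lemma dist_cut_add (hc : G.Connected) {a b c : V} (h : ¬ ReachOff G {c} a b) :
    G.dist a b = G.dist a c + G.dist c b := by
  classical
  obtain ⟨p, hp⟩ := hc.exists_walk_length_eq_dist a b
  obtain ⟨x, hx, hxc⟩ := exists_mem_of_not_reachOff h p
  rw [Set.mem_singleton_iff] at hxc
  subst hxc
  have h1 : G.dist a x ≤ (p.takeUntil x hx).length := dist_le _
  have h2 : G.dist x b ≤ (p.dropUntil x hx).length := dist_le _
  have h3 : (p.takeUntil x hx).length + (p.dropUntil x hx).length = p.length := by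
    rw [← Walk.length_append, Walk.take_spec]
  have h4 := hc.dist_triangle (u := a) (v := x) (w := b)
  omega

lemma exists_last_hit {T : Set V} :
    ∀ {a b : V} (q : G.Walk a b), (∃ x ∈ q.support, x ∈ T) →
    ∃ r, r ∈ T ∧ ∃ q₂ : G.Walk r b, q₂.support.Sublist q.support ∧
      ∀ x ∈ q₂.support, x ∈ T → x = r := by
  intro a b q
  induction q with
  | nil =>
    intro hex
    obtain ⟨x, hx, hxT⟩ := hex
    simp only [Walk.support_nil, List.mem_singleton] at hx
    subst hx
    refine ⟨x, hxT, Walk.nil, List.Sublist.refl _, ?_⟩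
    intro y hy _
    simp only [Walk.support_nil, List.mem_singleton] at hy
    exact hy
  | cons hadj p ih =>
    intro hex
    by_cases hrest : ∃ x ∈ p.support, x ∈ T
    · obtain ⟨r, hrT, q₂, hsub, hprop⟩ := ih hrest
      refine ⟨r, hrT, q₂, ?_, hprop⟩
      rw [Walk.support_cons]
      exact hsub.trans (List.sublist_cons_self _ _)
    · push_neg at hrest
      obtain ⟨x, hx, hxT⟩ := hex
      rw [Walk.support_cons] at hx
      rcases List.mem_cons.1 hx with rfl | hx'
      · refine ⟨x, hxT, Walk.cons hadj p, List.Sublist.refl _, ?_⟩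
        intro y hy hyT
        rw [Walk.support_cons] at hy
        rcases List.mem_cons.1 hy with rfl | hy'
        · rfl
        · exact absurd hyT (hrest y hy')
      · exact absurd hxT (hrest x hx')

lemma reachable_induce_of_walk {T : Set V} :
    ∀ {a b : V} (p : G.Walk a b) (hp : ∀ x ∈ p.support, x ∈ T),
      (G.induce T).Reachable ⟨a, hp a p.start_mem_support⟩ ⟨b, hp b p.end_mem_support⟩ := by
  intro a b p
  induction p with
  | nil => intro hp; exact Reachable.refl _
  | @cons a c b hadj p ih =>
    intro hp
    have hcT : c ∈ T := hp c (by rw [Walk.support_cons]; exact List.mem_cons_of_mem _ p.start_mem_support)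
    have h1 : (G.induce T).Adj ⟨a, hp a ((Walk.cons hadj p).start_mem_support)⟩ ⟨c, hcT⟩ :=
      SimpleGraph.comap_adj.2 hadj
    have h2 := ih (fun x hx => hp x (by rw [Walk.support_cons]; exact List.mem_cons_of_mem _ hx))
    exact h1.reachable.trans h2

lemma induce_connected_of_spanning_walk {T : Set V} {a b : V} (p : G.Walk a b)
    (hsub : ∀ x ∈ p.support, x ∈ T) (hall : ∀ x ∈ T, x ∈ p.support) :
    (G.induce T).Connected := by
  classical
  rw [SimpleGraph.connected_iff]
  refine ⟨?_, ⟨⟨a, hsub a p.start_mem_support⟩⟩⟩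
  rintro ⟨x, hx⟩ ⟨y, hy⟩
  have hx' := hall x hx
  have hy' := hall y hy
  have r1 := reachable_induce_of_walk (p.takeUntil x hx')
      (fun z hz => hsub z (Walk.support_takeUntil_subset p hx' hz))
  have r2 := reachable_induce_of_walk (p.takeUntil y hy')
      (fun z hz => hsub z (Walk.support_takeUntil_subset p hy' hz))
  exact r1.symm.trans r2

lemma end_mem_support_tail {u v : V} (p : G.Walk u v) (h : ¬ p.Nil) :
    v ∈ p.support.tail := by
  cases p with
  | nil => simp at h
  | cons hadj p => simpa using p.end_mem_support

lemma ne_of_nodup_nonnil {u v : V} (p : G.Walk u v) (hnd : p.support.Nodup)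
    (h : ¬ p.Nil) : u ≠ v := by
  intro hcon
  have h1 := end_mem_support_tail p h
  have h2 := p.support_eq_cons
  rw [h2] at hnd
  exact (List.nodup_cons.1 hnd).1 (hcon ▸ h1)

lemma clique_of_closed_walk (hBG : IsBlockGraph G) {s : V} (W : G.Walk s s)
    (hnd : W.support.tail.Nodup) (hlen : 3 ≤ W.length) :
    G.IsClique {x | x ∈ W.support} := by
  classical
  have hWnil : ¬ W.Nil := by rw [Walk.not_nil_iff_lt_length]; omega
  have hsupp_eq : W.support = s :: W.support.tail := W.support_eq_cons
  have hs_tail : s ∈ W.support.tail := end_mem_support_tail W hWnil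
  set B : Set V := {x | x ∈ W.support} with hB
  have hmem_tail : ∀ x, x ∈ B ↔ x ∈ W.support.tail := by
    intro x
    constructor
    · intro hx
      have hx' : x ∈ W.support := hx
      rw [hsupp_eq] at hx'
      rcases List.mem_cons.1 hx' with rfl | hx''
      · exact hs_tail
      · exact hx''
    · intro hx
      show x ∈ W.support
      rw [hsupp_eq]
      exact List.mem_cons_of_mem _ hx
  have htail_len : W.support.tail.length = W.length := by
    have h1 := W.length_support
    have h2 : W.support.tail.length = W.support.length - 1 := by
      simp [List.length_tail]
    omega
  have hcard : 3 ≤ B.ncard := by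
    have hBeq : B = ↑(W.support.tail.toFinset) := by
      rw [List.coe_toFinset]
      ext x
      exact hmem_tail x
    rw [hBeq, Set.ncard_coe_finset, List.toFinset_card_of_nodup hnd, htail_len]
    exact hlen
  have hconn : (G.induce B).Connected :=
    induce_connected_of_spanning_walk W (fun x hx => hx) (fun x hx => hx)
  have hdel : ∀ x ∈ B, (G.induce (B \ {x})).Connected := by
    intro x hx
    have hx' : x ∈ W.support := hx
    have hrot := W.support_rotate x hx'
    have hrotnd : (W.rotate x hx').support.tail.Nodup := (hrot.nodup_iff).2 hnd
    have hrotmem : ∀ y, y ∈ (W.rotate x hx').support.tail ↔ y ∈ W.support.tail :=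
      fun y => hrot.perm.mem_iff
    have hlenx : (W.rotate x hx').length = W.length := by
      have h5 := congrArg Walk.length (W.take_spec hx')
      rw [Walk.length_append] at h5
      rw [Walk.rotate, Walk.length_append]
      omega
    have hxnil : ¬ (W.rotate x hx').Nil := by rw [Walk.not_nil_iff_lt_length]; omega
    have hqsupp : (W.rotate x hx').tail.support = (W.rotate x hx').support.tail :=
      Walk.support_tail_of_not_nil _ hxnil
    have hqlen : (W.rotate x hx').tail.length + 1 = (W.rotate x hx').length :=
      Walk.length_tail_add_one hxnil
    have hqnd : (W.rotate x hx').tail.support.Nodup := by rw [hqsupp]; exact hrotnd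
    have hqnil : ¬ (W.rotate x hx').tail.Nil := by rw [Walk.not_nil_iff_lt_length]; omega
    have hyx : (W.rotate x hx').getVert 1 ≠ x := ne_of_nodup_nonnil _ hqnd hqnil
    obtain ⟨z, hxz, q', hq'eq⟩ := Walk.exists_eq_cons_of_ne hyx.symm (W.rotate x hx').tail.reverse
    have hrevsupp : (W.rotate x hx').tail.reverse.support = x :: q'.support := by
      rw [hq'eq, Walk.support_cons]
    have hrevnd : (W.rotate x hx').tail.reverse.support.Nodup := by
      rw [Walk.support_reverse]
      exact List.nodup_reverse.2 hqnd
    have hxnotq' : x ∉ q'.support := by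
      rw [hrevsupp] at hrevnd
      exact (List.nodup_cons.1 hrevnd).1
    have hmemq' : ∀ w, w ∈ (W.rotate x hx').tail.support ↔ w = x ∨ w ∈ q'.support := by
      intro w
      rw [← List.mem_reverse, ← Walk.support_reverse, hrevsupp]
      simp
    apply induce_connected_of_spanning_walk q'
    · intro w hw
      constructor
      · show w ∈ W.support
        rw [hsupp_eq]
        refine List.mem_cons_of_mem _ ?_
        rw [← hrotmem w, ← hqsupp, hmemq' w]
        exact Or.inr hw
      · simp only [Set.mem_singleton_iff]
        intro hcon
        exact hxnotq' (hcon ▸ hw)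
    · rintro w ⟨hwB, hwx⟩
      simp only [Set.mem_singleton_iff] at hwx
      have : w ∈ (W.rotate x hx').tail.support := by
        rw [hqsupp, hrotmem w]
        exact (hmem_tail w).1 hwB
      rcases (hmemq' w).1 this with rfl | hw'
      · exact absurd rfl hwx
      · exact hw'
  exact hBG.2 B hcard hconn hdel
lemma ReachOff.concat' {S : Set V} {u a b : V} (h : ReachOff G S u a)
    (hadj : G.Adj a b) (hb : b ∉ S) : ReachOff G S u b := by
  obtain ⟨p, hp⟩ := h
  refine ⟨p.concat hadj, fun x hx => ?_⟩
  rw [Walk.support_concat, List.mem_append] at hx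
  rcases hx with hx | hx
  · exact hp x hx
  · rw [List.mem_singleton] at hx
    exact hx ▸ hb

lemma sep_neighbors {S : Set V} {u v s : V} (hu : u ∉ S) (hv : v ∉ S) (hs : s ∈ S)
    (hP : ReachOff G (S \ {s}) u v) (hsep : ¬ ReachOff G S u v) :
    ∃ a b, G.Adj a s ∧ G.Adj s b ∧ ReachOff G S u a ∧ ReachOff G S b v := by
  classical
  obtain ⟨P₀, hP₀⟩ := hP
  have hPp : P₀.bypass.IsPath := P₀.bypass_isPath
  have hPavoid : ∀ x ∈ P₀.bypass.support, x ∉ S \ {s} :=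
    fun x hx => hP₀ x (P₀.support_bypass_subset hx)
  have hsP : s ∈ P₀.bypass.support := by
    by_contra hcon
    apply hsep
    refine ⟨P₀.bypass, fun x hx hxS => ?_⟩
    have := hPavoid x hx
    rw [Set.mem_diff, Set.mem_singleton_iff] at this
    push_neg at this
    exact hcon ((this hxS) ▸ hx)
  have hus : u ≠ s := fun hcon => hu (hcon ▸ hs)
  have hsv : s ≠ v := fun hcon => hv (hcon ▸ hs)
  -- the two halves
  have hP1p : (P₀.bypass.takeUntil s hsP).IsPath := hPp.takeUntil hsP
  have hP2p : (P₀.bypass.dropUntil s hsP).IsPath := hPp.dropUntil hsP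
  -- a from reverse of P1
  obtain ⟨a, hsa, Ra, hRaeq⟩ := Walk.exists_eq_cons_of_ne hus.symm (P₀.bypass.takeUntil s hsP).reverse
  have hRasupp : (P₀.bypass.takeUntil s hsP).reverse.support = s :: Ra.support := by
    rw [hRaeq, Walk.support_cons]
  have hRand : (P₀.bypass.takeUntil s hsP).reverse.support.Nodup := by
    rw [Walk.support_reverse]
    exact List.nodup_reverse.2 hP1p.support_nodup
  have hsnotRa : s ∉ Ra.support := by
    rw [hRasupp] at hRand
    exact (List.nodup_cons.1 hRand).1
  have hRaavoid : ∀ x ∈ Ra.support, x ∉ S := by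
    intro x hx hxS
    have hx1 : x ∈ (P₀.bypass.takeUntil s hsP).reverse.support := by
      rw [hRasupp]; exact List.mem_cons_of_mem _ hx
    rw [Walk.support_reverse, List.mem_reverse] at hx1
    have := hPavoid x (Walk.support_takeUntil_subset _ hsP hx1)
    rw [Set.mem_diff, Set.mem_singleton_iff] at this
    push_neg at this
    exact hsnotRa ((this hxS) ▸ hx)
  -- b from P2
  obtain ⟨b, hsb, Rb, hRbeq⟩ := Walk.exists_eq_cons_of_ne hsv (P₀.bypass.dropUntil s hsP)
  have hRbsupp : (P₀.bypass.dropUntil s hsP).support = s :: Rb.support := by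
    rw [hRbeq, Walk.support_cons]
  have hsnotRb : s ∉ Rb.support := by
    have := hP2p.support_nodup
    rw [hRbsupp] at this
    exact (List.nodup_cons.1 this).1
  have hRbavoid : ∀ x ∈ Rb.support, x ∉ S := by
    intro x hx hxS
    have hx1 : x ∈ (P₀.bypass.dropUntil s hsP).support := by
      rw [hRbsupp]; exact List.mem_cons_of_mem _ hx
    have := hPavoid x (Walk.support_dropUntil_subset _ hsP hx1)
    rw [Set.mem_diff, Set.mem_singleton_iff] at this
    push_neg at this
    exact hsnotRb ((this hxS) ▸ hx)
  exact ⟨a, b, hsa.symm, hsb, ⟨Ra.reverse, fun x hx => hRaavoid x (by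
      rwa [Walk.support_reverse, List.mem_reverse] at hx)⟩, ⟨Rb, hRbavoid⟩⟩

lemma cut_of_sep [Fintype V] (hBG : IsBlockGraph G) :
    ∀ (n : ℕ) {S : Set V} {u v : V}, S.ncard ≤ n → u ∉ S → v ∉ S → ¬ ReachOff G S u v →
    ∃ c ∈ S, ¬ ReachOff G {c} u v := by
  intro n
  induction n with
  | zero =>
    intro S u v hcard hu hv hsep
    exfalso
    have hS0 : S = ∅ := (Set.ncard_eq_zero (Set.toFinite S)).1 (by omega)
    exact hsep (hS0 ▸ reachOff_empty hBG.1 u v)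
  | succ n ih =>
    intro S u v hcard hu hv hsep
    classical
    by_cases hred : ∃ s ∈ S, ¬ ReachOff G (S \ {s}) u v
    · obtain ⟨s, hs, hsep'⟩ := hred
      have hcard' : (S \ {s}).ncard ≤ n := by
        have := Set.ncard_diff_singleton_lt_of_mem hs (Set.toFinite S)
        omega
      obtain ⟨c, hc, hcut⟩ := ih hcard' (fun hcon => hu hcon.1) (fun hcon => hv hcon.1) hsep'
      exact ⟨c, hc.1, hcut⟩
    · push_neg at hred
      have hSne : S.Nonempty := by
        by_contra hcon
        rw [Set.not_nonempty_iff_eq_empty] at hcon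
        exact absurd (hcon ▸ reachOff_empty hBG.1 u v) hsep
      obtain ⟨s, hs⟩ := hSne
      by_cases hsing : ∃ t ∈ S, t ≠ s
      case neg =>
        push_neg at hsing
        have hSeq : S = {s} := by
          ext x
          exact ⟨fun hx => hsing x hx, fun hx => hx ▸ hs⟩
        exact ⟨s, hs, by rwa [hSeq] at hsep⟩
      case pos =>
      exfalso
      obtain ⟨t, ht, hts⟩ := hsing
      obtain ⟨a, b, hsa, hsb, hua, hbv⟩ := sep_neighbors hu hv hs (hred s hs) hsep
      obtain ⟨a', b', hta', htb', hua', hb'v⟩ := sep_neighbors hu hv ht (hred t ht) hsep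
      obtain ⟨w1, hw1⟩ := (hua.symm').trans' hua'
      have hpu_avoid : ∀ x ∈ w1.bypass.support, x ∉ S :=
        fun x hx => hw1 x (w1.support_bypass_subset hx)
      have hpu_reach : ∀ x ∈ w1.bypass.support, ReachOff G S u x := by
        intro x hx
        exact hua.trans' ⟨w1.bypass.takeUntil x hx,
          fun y hy => hpu_avoid y (Walk.support_takeUntil_subset _ hx hy)⟩
      obtain ⟨w2, hw2⟩ := hb'v.trans' (hbv.symm')
      have hpv_avoid : ∀ x ∈ w2.bypass.support, x ∉ S :=
        fun x hx => hw2 x (w2.support_bypass_subset hx)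
      have hpv_reach : ∀ x ∈ w2.bypass.support, ReachOff G S x v := by
        intro x hx
        exact ReachOff.trans' ⟨w2.bypass.dropUntil x hx,
          fun y hy => hpv_avoid y (Walk.support_dropUntil_subset _ hx hy)⟩ hbv
      have hdisj : ∀ x, x ∈ w1.bypass.support → x ∈ w2.bypass.support → False := by
        intro x h1 h2
        exact hsep ((hpu_reach x h1).trans' (hpv_reach x h2))
      have hsw1 : s ∉ w1.bypass.support := fun hc => hpu_avoid s hc hs
      have htw1 : t ∉ w1.bypass.support := fun hc => hpu_avoid t hc ht
      have hsw2 : s ∉ w2.bypass.support := fun hc => hpv_avoid s hc hs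
      have htw2 : t ∉ w2.bypass.support := fun hc => hpv_avoid t hc ht
      set Wc : G.Walk s s := Walk.cons hsa.symm (w1.bypass.append (Walk.cons hta'
        (Walk.cons htb' (w2.bypass.append (Walk.cons hsb.symm Walk.nil))))) with hWc
      have hWs : Wc.support = s :: (w1.bypass.support ++ (t :: (w2.bypass.support ++ [s]))) := by
        simp [hWc, Walk.support_append, Walk.support_cons]
      have hnd : Wc.support.tail.Nodup := by
        rw [hWs]
        simp only [List.tail_cons]
        have h2 : (t :: (w2.bypass.support ++ [s])).Nodup := by
          rw [List.nodup_cons, List.nodup_append]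
          refine ⟨?_, w2.bypass_isPath.support_nodup, List.nodup_singleton s, ?_⟩
          · simp only [List.mem_append, List.mem_singleton]
            rintro (h | rfl)
            · exact htw2 h
            · exact hts rfl
          · intro x hx y hx2 hxy
            subst hxy
            rw [List.mem_singleton] at hx2
            exact hsw2 (hx2 ▸ hx)
        rw [List.nodup_append]
        refine ⟨w1.bypass_isPath.support_nodup, h2, ?_⟩
        intro x hx y hx2 hxy
        subst hxy
        rcases List.mem_cons.1 hx2 with rfl | hx3
        · exact htw1 hx
        · rcases List.mem_append.1 hx3 with h4 | h4
          · exact hdisj x hx h4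
          · rw [List.mem_singleton] at h4
            exact hsw1 (h4 ▸ hx)
      have hlen3 : 3 ≤ Wc.length := by
        rw [hWc]
        simp only [Walk.length_append, Walk.length_cons, Walk.length_nil]
        omega
      have hclique := clique_of_closed_walk hBG Wc hnd hlen3
      have haW : a ∈ {x | x ∈ Wc.support} := by
        show a ∈ Wc.support
        rw [hWs]
        exact List.mem_cons_of_mem _ (List.mem_append.2 (Or.inl w1.bypass.start_mem_support))
      have hbW : b ∈ {x | x ∈ Wc.support} := by
        show b ∈ Wc.support
        rw [hWs]
        refine List.mem_cons_of_mem _ (List.mem_append.2 (Or.inr ?_))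
        exact List.mem_cons_of_mem _ (List.mem_append.2 (Or.inl w2.bypass.end_mem_support))
      have hneq : a ≠ b := fun hc => hdisj a w1.bypass.start_mem_support (hc ▸ w2.bypass.end_mem_support)
      have hAB : G.Adj a b := hclique haW hbW hneq
      have hbS : b ∉ S := hpv_avoid b w2.bypass.end_mem_support
      exact hsep ((hua.concat' hAB hbS).trans' (hpv_reach b w2.bypass.end_mem_support))
lemma dist_eq_one_of_adj (hc : G.Connected) {x y : V} (h : G.Adj x y) : G.dist x y = 1 := by
  have h1 : G.dist x y ≤ 1 := by
    have := dist_le (Walk.cons h Walk.nil)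
    simpa using this
  have h2 : 0 < G.dist x y := hc.pos_dist_of_ne h.ne
  omega

lemma not_mem_of_far {x y z : V} (p : G.Walk x y) (h : p.length < G.dist x z) :
    z ∉ p.support := by
  classical
  intro hz
  have h1 := dist_le (p.takeUntil z hz)
  have h2 := Walk.length_takeUntil_le p hz
  omega

lemma gate_exists (hBG : IsBlockGraph G) {v c : V} {m : ℕ} (hm : 1 ≤ m)
    (hd : G.dist v c = m) :
    ∃ g, G.Adj g c ∧ G.dist v g + 1 = m ∧ ReachOff G ({c} : Set V) v g ∧
      ¬ ReachOff G ({g} : Set V) v c := by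
  classical
  have hvc : v ≠ c := by
    intro hcon
    rw [hcon, SimpleGraph.dist_self] at hd
    omega
  obtain ⟨γ, hγ⟩ := hBG.1.exists_walk_length_eq_dist v c
  obtain ⟨g, hcg, R, hReq⟩ := Walk.exists_eq_cons_of_ne hvc.symm γ.reverse
  have hRlen : R.length + 1 = m := by
    have h1 := γ.length_reverse
    rw [hReq, Walk.length_cons] at h1
    omega
  have hgc1 : G.dist g c = 1 := dist_eq_one_of_adj hBG.1 hcg.symm
  have hdvg : G.dist v g + 1 = m := by
    have h1 : G.dist g v ≤ R.length := dist_le R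
    have h2 : G.dist v c ≤ G.dist v g + G.dist g c := hBG.1.dist_triangle
    have h3 : G.dist v g = G.dist g v := SimpleGraph.dist_comm
    omega
  -- geodesic path v → g, avoiding c
  obtain ⟨P₀, hP₀⟩ := hBG.1.exists_walk_length_eq_dist v g
  have hPpath : P₀.IsPath := P₀.isPath_of_length_eq_dist hP₀
  have hcP : c ∉ P₀.support := not_mem_of_far P₀ (by omega)
  have hreachvg : ReachOff G ({c} : Set V) v g :=
    ⟨P₀, fun x hx hxc => hcP ((Set.mem_singleton_iff.1 hxc) ▸ hx)⟩
  refine ⟨g, hcg.symm, hdvg, hreachvg, ?_⟩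
  intro hreach
  obtain ⟨Q₀, hQ₀⟩ := hreach
  have hQpath : Q₀.bypass.IsPath := Q₀.bypass_isPath
  have hgQ : g ∉ Q₀.bypass.support := by
    intro hcon
    exact hQ₀ g (Q₀.support_bypass_subset hcon) rfl
  obtain ⟨r, hrT, Q₂, hsubl, hprop⟩ := exists_last_hit (T := {x | x ∈ P₀.support})
    Q₀.bypass ⟨v, Q₀.bypass.start_mem_support, P₀.start_mem_support⟩
  have hrP : r ∈ P₀.support := hrT
  have hrc : r ≠ c := fun hcon => hcP (hcon ▸ hrP)
  have hrg : r ≠ g := by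
    intro hcon
    exact hgQ (hcon ▸ (hsubl.subset Q₂.start_mem_support))
  -- distances along P₀
  have hsplit : (P₀.takeUntil r hrP).length + (P₀.dropUntil r hrP).length = P₀.length := by
    rw [← Walk.length_append, Walk.take_spec]
  have hd1 : G.dist v r ≤ (P₀.takeUntil r hrP).length := dist_le _
  have hd2 : G.dist r g ≤ (P₀.dropUntil r hrP).length := dist_le _
  have hd3 : G.dist v g ≤ G.dist v r + G.dist r g := hBG.1.dist_triangle
  have hd4 : 0 < G.dist r g := hBG.1.pos_dist_of_ne hrg
  -- the cycle
  have hQ₂nd : Q₂.support.Nodup := hsubl.nodup hQpath.support_nodup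
  have hP₂ : (P₀.dropUntil r hrP).IsPath := hPpath.dropUntil hrP
  set W4 : G.Walk r r := Q₂.append (Walk.cons hcg (P₀.dropUntil r hrP).reverse) with hW4
  have hW4s : W4.support = r :: (Q₂.support.tail ++ (P₀.dropUntil r hrP).reverse.support) := by
    rw [hW4, Walk.support_append, Walk.support_cons, List.tail_cons]
    rw [Q₂.support_eq_cons]
    rfl
  have hQt : Q₂.support.tail.Nodup := by
    have h := hQ₂nd
    rw [Q₂.support_eq_cons] at h
    exact (List.nodup_cons.1 h).2
  have hnd4 : W4.support.tail.Nodup := by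
    rw [hW4s, List.tail_cons, List.nodup_append]
    refine ⟨hQt, (by rw [Walk.support_reverse]; exact List.nodup_reverse.2 hP₂.support_nodup), ?_⟩
    intro x hx1 y hx2 hxy
    subst hxy
    have hx1' : x ∈ Q₂.support := List.mem_of_mem_tail hx1
    have hx2' : x ∈ P₀.support := by
      rw [Walk.support_reverse, List.mem_reverse] at hx2
      exact Walk.support_dropUntil_subset _ hrP hx2
    have hxr : x = r := hprop x hx1' hx2'
    have h := hQ₂nd
    rw [Q₂.support_eq_cons] at h
    exact (List.nodup_cons.1 h).1 (hxr ▸ hx1)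
  have hQ₂len : 1 ≤ Q₂.length := by
    rcases Nat.eq_zero_or_pos Q₂.length with h0 | hpos
    · exact absurd (Walk.eq_of_length_eq_zero h0) hrc
    · exact hpos
  have hP₂len : 1 ≤ (P₀.dropUntil r hrP).length := by
    rcases Nat.eq_zero_or_pos (P₀.dropUntil r hrP).length with h0 | hpos
    · exact absurd (Walk.eq_of_length_eq_zero h0) hrg
    · exact hpos
  have hlen4 : 3 ≤ W4.length := by
    rw [hW4, Walk.length_append, Walk.length_cons, Walk.length_reverse]
    omega
  have hclique := clique_of_closed_walk hBG W4 hnd4 hlen4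
  have hcW : c ∈ {x | x ∈ W4.support} := by
    show c ∈ W4.support
    rw [hW4, Walk.mem_support_append_iff]
    exact Or.inl Q₂.end_mem_support
  have hrW : r ∈ {x | x ∈ W4.support} := W4.start_mem_support
  have hadjcr : G.Adj c r := hclique hcW hrW (Ne.symm hrc)
  have hrc1 : G.dist r c = 1 := dist_eq_one_of_adj hBG.1 hadjcr.symm
  have hfin : G.dist v c ≤ G.dist v r + G.dist r c := hBG.1.dist_triangle
  omega

lemma keyC [Fintype V] (hBG : IsBlockGraph G) :
    ∀ (m : ℕ) (v v' : V), memPm G v v' m →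
      ∃ x x', memPm G x x' 1 ∧ distinguishers G x x' ⊆ distinguishers G v v' := by
  intro m
  induction m using Nat.strong_induction_on with
  | _ m IH =>
  intro v v' hp
  obtain ⟨hvv', S, hsph, hsepex, w₀, hw₀S, hw₀v, hw₀v'⟩ := hp
  -- S nonempty
  have hSne : S.Nonempty := by
    by_contra hcon
    rw [Set.not_nonempty_iff_eq_empty] at hcon
    obtain ⟨a0, b0, _, _, hnr⟩ := hsepex
    exact hnr (hcon ▸ reachOff_empty hBG.1 a0 b0)
  have hm : 1 ≤ m := by
    by_contra hcon
    obtain ⟨s0, hs0⟩ := hSne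
    have h1 : G.dist v s0 = m := (hsph hs0).1
    have h2 : G.dist v' s0 = m := (hsph hs0).2
    have hv1 : v = s0 := (hBG.1.dist_eq_zero_iff).1 (by omega)
    have hv2 : v' = s0 := (hBG.1.dist_eq_zero_iff).1 (by omega)
    exact hvv' (hv1.trans hv2.symm)
  have hvS : v ∉ S := by
    intro hc
    have h2 : G.dist v v = m := (hsph hc).1
    rw [SimpleGraph.dist_self] at h2
    omega
  have hv'S : v' ∉ S := by
    intro hc
    have h2 : G.dist v' v' = m := (hsph hc).2
    rw [SimpleGraph.dist_self] at h2
    omega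
  obtain ⟨c₁, hc₁S, hc₁cut⟩ := cut_of_sep hBG S.ncard (le_refl _) hw₀S hvS hw₀v
  obtain ⟨c₂, hc₂S, hc₂cut⟩ := cut_of_sep hBG S.ncard (le_refl _) hw₀S hv'S hw₀v'
  have hcombine : ∃ c ∈ S, ¬ ReachOff G {c} w₀ v ∧ ¬ ReachOff G {c} w₀ v' := by
    classical
    by_cases h1 : ReachOff G {c₁} w₀ v'
    · by_cases h2 : ReachOff G {c₂} w₀ v
      · exfalso
        have hcut1 : ¬ ReachOff G ({c₁} : Set V) v v' := fun hr => hc₁cut (h1.trans' hr.symm')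
        have hcut2 : ¬ ReachOff G ({c₂} : Set V) v v' := fun hr => hc₂cut (h2.trans' hr)
        obtain ⟨P, hPlen⟩ := hBG.1.exists_walk_length_eq_dist v v'
        have hmemP : ∀ {c : V}, ¬ ReachOff G ({c} : Set V) v v' → c ∈ P.support := by
          intro c hcut
          obtain ⟨x, hx, hxc⟩ := exists_mem_of_not_reachOff hcut P
          rw [Set.mem_singleton_iff] at hxc
          exact hxc ▸ hx
        have hgv : ∀ {c : V} (hcS : c ∈ S) (hcut : ¬ ReachOff G ({c} : Set V) v v'),
            P.getVert m = c := by
          intro c hcS hcut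
          have hcP : c ∈ P.support := hmemP hcut
          have hL1 : G.dist v c ≤ (P.takeUntil c hcP).length := dist_le _
          have hL2 : G.dist c v' ≤ (P.dropUntil c hcP).length := dist_le _
          have hL3 : (P.takeUntil c hcP).length + (P.dropUntil c hcP).length = P.length := by
            rw [← Walk.length_append, Walk.take_spec]
          have hd1 : G.dist v c = m := (hsph hcS).1
          have hd2 : G.dist c v' = m := by
            rw [SimpleGraph.dist_comm]
            exact (hsph hcS).2
          have hadd : G.dist v v' = G.dist v c + G.dist c v' := dist_cut_add hBG.1 hcut
          have hlen : (P.takeUntil c hcP).length = m := by omega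
          have hspec := P.take_spec hcP
          have h2 : P.getVert m = ((P.takeUntil c hcP).append (P.dropUntil c hcP)).getVert m := by
            rw [hspec]
          rw [Walk.getVert_append, hlen] at h2
          simpa using h2
        have hceq : c₁ = c₂ := by
          rw [← hgv hc₁S hcut1, ← hgv hc₂S hcut2]
        rw [hceq] at h1
        exact hc₂cut h1
      · exact ⟨c₂, hc₂S, h2, hc₂cut⟩
    · exact ⟨c₁, hc₁S, hc₁cut, h1⟩
  obtain ⟨c, hcS, hcv, hcv'⟩ := hcombine
  have hdvc : G.dist v c = m := (hsph hcS).1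
  have hdv'c : G.dist v' c = m := (hsph hcS).2
  obtain ⟨g, hgc, hdvg, hgreach, hgcut⟩ := gate_exists hBG hm hdvc
  obtain ⟨g', hg'c, hdv'g', hg'reach, hg'cut⟩ := gate_exists hBG hm hdv'c
  by_cases hgg' : g = g'
  · -- recurse at m - 1
    subst hgg'
    have hm2 : 2 ≤ m := by
      by_contra hcon
      have hm1 : m = 1 := by omega
      have h1 : v = g := (hBG.1.dist_eq_zero_iff).1 (by omega)
      have h2 : v' = g := (hBG.1.dist_eq_zero_iff).1 (by omega)
      exact hvv' (h1.trans h2.symm)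
    have hvg : v ≠ g := by
      intro hcon
      rw [hcon, SimpleGraph.dist_self] at hdvg
      omega
    have hmem : memPm G v v' (m - 1) := by
      refine ⟨hvv', {g}, ?_, ⟨c, v, ?_, ?_, ?_⟩, ⟨c, ?_, ?_, ?_⟩⟩
      · intro x hx
        rw [Set.mem_singleton_iff] at hx
        subst hx
        constructor
        · show G.dist v x = m - 1
          omega
        · show G.dist v' x = m - 1
          omega
      · exact fun hc2 => hgc.ne (Set.mem_singleton_iff.1 hc2).symm
      · exact fun hc2 => hvg (Set.mem_singleton_iff.1 hc2)
      · exact fun hr => hgcut hr.symm'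
      · exact fun hc2 => hgc.ne (Set.mem_singleton_iff.1 hc2).symm
      · exact fun hr => hgcut hr.symm'
      · exact fun hr => hg'cut hr.symm'
    exact IH (m - 1) (by omega) v v' hmem
  · -- finish with pair (g, g')
    have hvc : v ≠ c := by
      intro hcon
      rw [hcon, SimpleGraph.dist_self] at hdvc
      omega
    have hw₀c : w₀ ∉ ({c} : Set V) := fun hcon => hw₀S ((Set.mem_singleton_iff.1 hcon) ▸ hcS)
    refine ⟨g, g', ⟨hgg', {c}, ?_, ⟨w₀, v, hw₀c, ?_, hcv⟩, ⟨w₀, hw₀c, ?_, ?_⟩⟩, ?_⟩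
    · intro x hx
      rw [Set.mem_singleton_iff] at hx
      subst hx
      exact ⟨dist_eq_one_of_adj hBG.1 hgc, dist_eq_one_of_adj hBG.1 hg'c⟩
    · exact fun hcon => hvc (Set.mem_singleton_iff.1 hcon)
    · exact fun hr => hcv (hr.trans' hgreach.symm')
    · exact fun hr => hcv' (hr.trans' hg'reach.symm')
    · -- inclusion of distinguishers
      intro w hw
      simp only [distinguishers, Set.mem_setOf_eq] at hw ⊢
      intro hDeq
      apply hw
      have key : ∀ (y gy : V), G.dist y c = m → G.dist y gy + 1 = m → G.Adj gy c →
          ¬ ReachOff G ({gy} : Set V) y c →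
          (G.dist w c = G.dist w gy + 1 ∧ G.dist w y + 2 ≤ G.dist w c + m) ∨
          (G.dist w gy + m = G.dist w y + 1 ∧ G.dist w c + m ≤ G.dist w y + 2) := by
        intro y gy hyc hyg hadj hcut
        by_cases hr : ReachOff G ({gy} : Set V) w y
        · left
          have hnrc : ¬ ReachOff G ({gy} : Set V) w c := fun hrc => hcut (hr.symm'.trans' hrc)
          have h1 : G.dist w c = G.dist w gy + G.dist gy c := dist_cut_add hBG.1 hnrc
          have h2 : G.dist gy c = 1 := dist_eq_one_of_adj hBG.1 hadj
          have h3 : G.dist w y ≤ G.dist w gy + G.dist gy y := hBG.1.dist_triangle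
          have h4 : G.dist gy y = G.dist y gy := SimpleGraph.dist_comm
          omega
        · right
          have h1 : G.dist w y = G.dist w gy + G.dist gy y := dist_cut_add hBG.1 hr
          have h2 : G.dist w c ≤ G.dist w gy + G.dist gy c := hBG.1.dist_triangle
          have h3 : G.dist gy c = 1 := dist_eq_one_of_adj hBG.1 hadj
          have h4 : G.dist gy y = G.dist y gy := SimpleGraph.dist_comm
          omega
      have k1 := key v g hdvc hdvg hgc hgcut
      have k2 := key v' g' hdv'c hdv'g' hg'c hg'cut
      have hDD : G.dist w v = G.dist w v' := by
        rw [SimpleGraph.dist_comm (u := w) (v := v), SimpleGraph.dist_comm (u := w) (v := v')]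
        exact hDeq
      have hfin : G.dist w g = G.dist w g' := by
        rcases k1 with ⟨e1, e2⟩ | ⟨e1, e2⟩ <;> rcases k2 with ⟨f1, f2⟩ | ⟨f1, f2⟩ <;> omega
      rw [SimpleGraph.dist_comm (u := g) (v := w), SimpleGraph.dist_comm (u := g') (v := w)]
      exact hfin
lemma muM_eq (hc : G.Connected) (v v' : V) (m : ℕ) :
    muM G v v' m = (distinguishers G v v').ncard := by
  classical
  unfold muM distinguishers
  congr 1
  ext w
  simp only [Set.mem_setOf_eq]
  constructor
  · rintro ⟨_, h2⟩
    exact h2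
  · intro h
    refine ⟨?_, h⟩
    intro hav
    apply h
    obtain ⟨hnotS, hrv, hrv'⟩ := hav
    have hdists : ∀ s ∈ SmUnion G v v' m, G.dist v s = m ∧ G.dist v' s = m := by
      rintro s ⟨S, hS, hsS⟩
      exact ⟨(hS.1 hsS).1, (hS.1 hsS).2⟩
    have hne : (SmUnion G v v' m).Nonempty := by
      by_contra hcon
      rw [Set.not_nonempty_iff_eq_empty] at hcon
      exact hrv (hcon ▸ reachOff_empty hc w v)
    have hKne : ((fun s => G.dist s w) '' (SmUnion G v v' m)).Nonempty := hne.image _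
    set k := sInf ((fun s => G.dist s w) '' (SmUnion G v v' m)) with hk
    obtain ⟨s₀, hs₀mem, hs₀eq⟩ := Nat.sInf_mem hKne
    have hs₀k : G.dist s₀ w = k := hs₀eq
    have claim : ∀ z : V, ¬ ReachOff G (SmUnion G v v' m) w z →
        (∀ s ∈ SmUnion G v v' m, G.dist z s = m) → G.dist z w = m + k := by
      intro z hnr hzd
      have hle : G.dist z w ≤ m + k := by
        have h1 := hc.dist_triangle (u := z) (v := s₀) (w := w)
        have h2 := hzd s₀ hs₀mem
        omega
      have hge : m + k ≤ G.dist z w := by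
        obtain ⟨p, hp⟩ := hc.exists_walk_length_eq_dist w z
        obtain ⟨x, hxp, hxU⟩ := exists_mem_of_not_reachOff hnr p
        have h1 : G.dist w x ≤ (p.takeUntil x hxp).length := dist_le _
        have h2 : G.dist x z ≤ (p.dropUntil x hxp).length := dist_le _
        have h3 : (p.takeUntil x hxp).length + (p.dropUntil x hxp).length = p.length := by
          rw [← Walk.length_append, Walk.take_spec]
        have h5 : k ≤ G.dist x w := Nat.sInf_le ⟨x, hxU, rfl⟩
        have h6 : G.dist z x = m := hzd x hxU
        have h7 : G.dist x z = G.dist z x := SimpleGraph.dist_comm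
        have h8 : G.dist x w = G.dist w x := SimpleGraph.dist_comm
        have h9 : G.dist z w = G.dist w z := SimpleGraph.dist_comm
        omega
      omega
    have e1 : G.dist v w = m + k := claim v hrv (fun s hs => (hdists s hs).1)
    have e2 : G.dist v' w = m + k := claim v' hrv' (fun s hs => (hdists s hs).2)
    rw [e1, e2]
  
end BlockAux

theorem stmt19 {V : Type*} [Fintype V] (G : SimpleGraph V)
    (hG : IsBlockGraph G) (h : ∃ (m : ℕ) (v v' : V), memPm G v v' m) :
    muG G = sInf {n | ∃ v v' : V, memPm G v v' 1 ∧ n = muM G v v' 1} := by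
  have hBsub : {n | ∃ v v' : V, memPm G v v' 1 ∧ n = muM G v v' 1} ⊆
      {n | ∃ (m : ℕ) (v v' : V), memPm G v v' m ∧ n = muM G v v' m} := by
    rintro n ⟨v, v', hp, hval⟩
    exact ⟨1, v, v', hp, hval⟩
  have hAne : {n | ∃ (m : ℕ) (v v' : V), memPm G v v' m ∧ n = muM G v v' m}.Nonempty := by
    obtain ⟨m, v, v', hp⟩ := h
    exact ⟨muM G v v' m, m, v, v', hp, rfl⟩
  have hBne : {n | ∃ v v' : V, memPm G v v' 1 ∧ n = muM G v v' 1}.Nonempty := by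
    obtain ⟨m, v, v', hp⟩ := h
    obtain ⟨x, x', hp1, _⟩ := keyC hG m v v' hp
    exact ⟨muM G x x' 1, x, x', hp1, rfl⟩
  unfold muG
  apply le_antisymm
  · exact Nat.sInf_le (hBsub (Nat.sInf_mem hBne))
  · obtain ⟨m, v, v', hp, hval⟩ := Nat.sInf_mem hAne
    obtain ⟨x, x', hp1, hsub⟩ := keyC hG m v v' hp
    have hle : muM G x x' 1 ≤ muM G v v' m := by
      rw [muM_eq hG.1, muM_eq hG.1]
      exact Set.ncard_le_ncard hsub (Set.toFinite _)
    calc sInf {n | ∃ v v' : V, memPm G v v' 1 ∧ n = muM G v v' 1}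
        ≤ muM G x x' 1 := Nat.sInf_le ⟨x, x', hp1, rfl⟩
      _ ≤ muM G v v' m := hle
      _ = sInf {n | ∃ (m : ℕ) (v v' : V), memPm G v v' m ∧ n = muM G v v' m} := hval.symm
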